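/- arXiv:1201.6203 — 2 statements merged into one kernel-verified Lean document; each statement's English description precedes it below -/
import Mathlib

section
/- For any n×n matrix C over a commutative ring, the difference Id − adj(Id + C) equals (C − (Tr C)·Id) + P₂(C), where P₂(C) is a matrix whose entries are polynomials in the entries of C with every monomial of degree at least 2 (and at most n−1). -/
open Matrix MvPolynomial TrivSqZeroExt DualNumber

section Aux
variable {n : ℕ} {R S : Type*} [CommRing R] [CommRing S]

lemma map_inr_mul_map_inr (M N : Matrix (Fin n) (Fin n) S) :
    (M.map (inr : S → DualNumber S)) * (N.map inr) = 0 := by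
  refine Matrix.ext fun i j => ?_
  rw [Matrix.mul_apply, show (0 : Matrix (Fin n) (Fin n) (DualNumber S)) i j = 0 from rfl]
  apply Finset.sum_eq_zero
  intro k _
  simp [Matrix.map_apply, inr_mul_inr]

lemma det_one_add_map_inr (M : Matrix (Fin n) (Fin n) S) :
    (1 + M.map (inr : S → DualNumber S)).det = 1 + inr (Matrix.trace M) := by
  have h : M.map (inr : S → DualNumber S) = (ε : DualNumber S) • (M.map inl) := by
    refine Matrix.ext fun i j => ?_
    ext <;> simp [Matrix.map_apply, smul_eq_mul]
  rw [h, Matrix.det_one_add_smul]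
  have htr : Matrix.trace (M.map (inl : S → DualNumber S)) = inl (Matrix.trace M) := by
    ext <;> simp [Matrix.trace, Matrix.map_apply, Matrix.diag, fst_sum, snd_sum]
  rw [htr, pow_two,
    show ((Polynomial.divX (Polynomial.divX (Matrix.det (1 + (Polynomial.X : Polynomial (DualNumber S)) • (M.map inl).map Polynomial.C)))).eval ε) * (ε * ε) = 0 by rw [eps_mul_eps, mul_zero]]
  ext <;> simp

lemma adjugate_one_add_map_inr (M : Matrix (Fin n) (Fin n) S) :
    (1 + M.map (inr : S → DualNumber S)).adjugate
      = 1 + (inr (Matrix.trace M) : DualNumber S) • (1 : Matrix (Fin n) (Fin n) (DualNumber S))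
        - M.map inr := by
  set E := M.map (inr : S → DualNumber S) with hE
  have hAB : (1 + E) * (1 - E) = 1 := by
    rw [mul_sub, mul_one, add_mul, one_mul, hE, map_inr_mul_map_inr]
    abel
  have hzero : (inr (Matrix.trace M) : DualNumber S) • E = 0 := by
    refine Matrix.ext fun i j => ?_
    simp [hE, Matrix.map_apply, Matrix.smul_apply, smul_eq_mul, inr_mul_inr]
  calc (1 + E).adjugate = (1 + E).adjugate * ((1 + E) * (1 - E)) := by rw [hAB, mul_one]
    _ = ((1 + E).adjugate * (1 + E)) * (1 - E) := by rw [mul_assoc]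
    _ = ((1 + E).det • (1 : Matrix (Fin n) (Fin n) (DualNumber S))) * (1 - E) := by
        rw [Matrix.adjugate_mul]
    _ = (1 + inr (Matrix.trace M) : DualNumber S) • (1 - E) := by
        rw [det_one_add_map_inr, Matrix.smul_mul, one_mul]
    _ = 1 + (inr (Matrix.trace M) : DualNumber S) • (1 : Matrix (Fin n) (Fin n) (DualNumber S)) - E := by
        rw [smul_sub, add_smul, add_smul, one_smul, one_smul, hzero, add_zero]

/-- evaluation at the square-zero direction `q` -/
noncomputable def phiAux (n : ℕ) (R : Type*) [CommRing R] (q : Fin n × Fin n) :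
    MvPolynomial (Fin n × Fin n) R →ₐ[R] DualNumber R :=
  aeval (fun p => if p = q then (ε : DualNumber R) else 0)

lemma phiAux_X (q p : Fin n × Fin n) :
    phiAux n R q (MvPolynomial.X p) = if p = q then (ε : DualNumber R) else 0 := by
  simp [phiAux]

lemma fst_phiAux (q : Fin n × Fin n) (p : MvPolynomial (Fin n × Fin n) R) :
    fst (phiAux n R q p) = constantCoeff p := by
  have : (TrivSqZeroExt.fstHom R R R).comp (phiAux n R q)
      = aeval (fun _ : Fin n × Fin n => (0 : R)) := by
    apply MvPolynomial.algHom_ext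
    intro p
    simp [phiAux]
    split <;> simp
  have h := congrArg (fun f => f p) this
  simpa [MvPolynomial.aeval_zero'] using h

lemma snd_phiAux (q : Fin n × Fin n) (p : MvPolynomial (Fin n × Fin n) R) :
    snd (phiAux n R q p) = coeff (Finsupp.single q 1) p := by
  induction p using MvPolynomial.induction_on with
  | C a =>
      simp only [phiAux, aeval_C]
      rw [show (algebraMap R (DualNumber R)) a = inl a from rfl, snd_inl, coeff_C]
      rw [if_neg (by simp [eq_comm, Finsupp.single_eq_zero])]
  | add p₁ p₂ h1 h2 =>
      simp [map_add, h1, h2]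
  | mul_X p s ih =>
      rw [_root_.map_mul, phiAux_X, DualNumber.snd_mul, coeff_mul_X']
      by_cases hs : s = q
      · subst hs
        simp [ih, fst_phiAux, Finsupp.single_eq_same]
        rfl
      · simp [hs, Finsupp.support_single_ne_zero, Finsupp.mem_support_iff]

lemma finsupp_le_sum (d : (Fin n × Fin n) →₀ ℕ) (p : Fin n × Fin n) :
    d p ≤ d.sum (fun _ e => e) := by
  by_cases hp : p ∈ d.support
  · exact Finset.single_le_sum (fun _ _ => Nat.zero_le _) hp
  · simp [Finsupp.notMem_support_iff.mp hp]

lemma finsupp_sum_eq_zero (d : (Fin n × Fin n) →₀ ℕ) (h : d.sum (fun _ e => e) = 0) :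
    d = 0 := by
  ext p
  simp only [Finsupp.coe_zero, Pi.zero_apply]
  have := finsupp_le_sum d p
  omega

lemma finsupp_sum_eq_one (d : (Fin n × Fin n) →₀ ℕ) (h : d.sum (fun _ e => e) = 1) :
    ∃ q, d = Finsupp.single q 1 := by
  have hne : d ≠ 0 := by
    intro h0
    rw [h0] at h
    simp [Finsupp.sum_zero_index] at h
  obtain ⟨q, hq⟩ : ∃ q, d q ≠ 0 := by
    by_contra hall
    push_neg at hall
    exact hne (Finsupp.ext fun p => hall p)
  refine ⟨q, Finsupp.ext fun p => ?_⟩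
  rcases eq_or_ne p q with rfl | hpq
  · have h1 := finsupp_le_sum d p
    rw [Finsupp.single_eq_same]
    omega
  · rw [Finsupp.single_eq_of_ne hpq]
    by_contra hp
    have hqs : q ∈ d.support := Finsupp.mem_support_iff.mpr hq
    have hps : p ∈ d.support := Finsupp.mem_support_iff.mpr hp
    have hsub : ({p, q} : Finset (Fin n × Fin n)) ⊆ d.support := by
      intro x hx
      rcases Finset.mem_insert.mp hx with rfl | hx
      · exact hps
      · rwa [Finset.mem_singleton.mp hx]
    have h2 : d p + d q ≤ d.sum (fun _ e => e) := by
      have := Finset.sum_le_sum_of_subset (f := fun x => d x) hsub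
      rwa [Finset.sum_insert (by simpa using hpq), Finset.sum_singleton] at this
    omega

lemma totalDegree_X_le' (s : Fin n × Fin n) :
    ((MvPolynomial.X s : MvPolynomial (Fin n × Fin n) R)).totalDegree ≤ 1 := by
  apply Finset.sup_le
  intro d hd
  have h := mem_support_iff.mp hd
  rw [coeff_X'] at h
  by_cases he : Finsupp.single s 1 = d
  · rw [← he]
    simp [Finsupp.sum_single_index]
  · simp [he] at h

lemma totalDegree_adjugate_le (A : Matrix (Fin n) (Fin n) (MvPolynomial (Fin n × Fin n) R))
    (hA : ∀ i j, (A i j).totalDegree ≤ 1) (i j : Fin n) :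
    ((A.adjugate) i j).totalDegree ≤ n - 1 := by
  rw [Matrix.adjugate_apply, Matrix.det_apply]
  refine (totalDegree_finset_sum _ _).trans (Finset.sup_le fun σ _ => ?_)
  refine (totalDegree_smul_le _ _).trans ?_
  refine (totalDegree_finset_prod _ _).trans ?_
  set M := A.updateRow j (Pi.single i 1) with hM
  set k₀ := σ.symm j with hk₀
  have hsplit : ∑ k : Fin n, (M (σ k) k).totalDegree
      = (M (σ k₀) k₀).totalDegree + ∑ k ∈ Finset.univ.erase k₀, (M (σ k) k).totalDegree := by
    exact (Finset.add_sum_erase _ (fun k => (M (σ k) k).totalDegree) (Finset.mem_univ k₀)).symm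
  rw [hsplit]
  have h0 : (M (σ k₀) k₀).totalDegree = 0 := by
    have : σ k₀ = j := by simp [hk₀]
    rw [this, hM, Matrix.updateRow_self]
    rcases Pi.single_apply i (1 : MvPolynomial (Fin n × Fin n) R) k₀ with h
    rw [h]
    split
    · exact totalDegree_one
    · exact totalDegree_zero
  have hrest : ∑ k ∈ Finset.univ.erase k₀, (M (σ k) k).totalDegree ≤ n - 1 := by
    have hb : ∀ k ∈ Finset.univ.erase k₀, (M (σ k) k).totalDegree ≤ 1 := by
      intro k hk
      have hkj : σ k ≠ j := by
        intro hkj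
        exact (Finset.mem_erase.mp hk).1 (by rw [hk₀, ← hkj, Equiv.symm_apply_apply])
      rw [hM, Matrix.updateRow_ne hkj]
      exact hA _ _
    calc ∑ k ∈ Finset.univ.erase k₀, (M (σ k) k).totalDegree
        ≤ (Finset.univ.erase k₀).card • 1 := Finset.sum_le_card_nsmul _ _ _ hb
      _ = n - 1 := by
          rw [Finset.card_erase_of_mem (Finset.mem_univ _), Finset.card_univ, Fintype.card_fin,
            smul_eq_mul, mul_one]
  omega

end Aux

/-- the generic matrix -/
noncomputable def genY (n : ℕ) (R : Type*) [CommRing R] :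
    Matrix (Fin n) (Fin n) (MvPolynomial (Fin n × Fin n) R) :=
  Matrix.of fun i j => MvPolynomial.X (i, j)

/-- the generic error term -/
noncomputable def genP (n : ℕ) (R : Type*) [CommRing R] :
    Matrix (Fin n) (Fin n) (MvPolynomial (Fin n × Fin n) R) :=
  1 - (1 + genY n R).adjugate - (genY n R - (Matrix.trace (genY n R)) • 1)

section Main
variable {n : ℕ} {R : Type*} [CommRing R]

lemma mapMatrix_genY (q : Fin n × Fin n) :
    (phiAux n R q).mapMatrix (genY n R)
      = (Matrix.single q.1 q.2 (1 : R)).map (inr : R → DualNumber R) := by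
  refine Matrix.ext fun i j => ?_
  rw [AlgHom.mapMatrix_apply, Matrix.map_apply, Matrix.map_apply]
  show phiAux n R q (genY n R i j) = inr (Matrix.single q.1 q.2 (1 : R) i j)
  rw [genY, Matrix.of_apply, phiAux_X]
  by_cases h : (i, j) = q
  · rw [if_pos h]
    obtain ⟨h1, h2⟩ : q.1 = i ∧ q.2 = j := by cases h; exact ⟨rfl, rfl⟩
    rw [Matrix.single, Matrix.of_apply, if_pos ⟨h1, h2⟩]
    rfl
  · rw [if_neg h]
    have hn : ¬(q.1 = i ∧ q.2 = j) := by
      intro hc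
      exact h (Prod.ext hc.1.symm hc.2.symm)
    rw [Matrix.single, Matrix.of_apply, if_neg hn, inr_zero]

lemma phiAux_trace (q : Fin n × Fin n) :
    phiAux n R q (Matrix.trace (genY n R))
      = inr (Matrix.trace (Matrix.single q.1 q.2 (1 : R))) := by
  have h1 : phiAux n R q (Matrix.trace (genY n R))
      = Matrix.trace ((phiAux n R q).mapMatrix (genY n R)) := by
    simp [Matrix.trace, Matrix.diag, map_sum, AlgHom.mapMatrix_apply, Matrix.map_apply]
  rw [h1, mapMatrix_genY]
  simp [Matrix.trace, Matrix.diag, Matrix.map_apply, Finset.sum_smul]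

lemma phiAux_one_entry (q : Fin n × Fin n) (i j : Fin n) :
    phiAux n R q ((1 : Matrix (Fin n) (Fin n) (MvPolynomial (Fin n × Fin n) R)) i j)
      = (1 : Matrix (Fin n) (Fin n) (DualNumber R)) i j := by
  rw [Matrix.one_apply, Matrix.one_apply]
  split <;> simp

lemma mapMatrix_smul_one (q : Fin n × Fin n) :
    (phiAux n R q).mapMatrix ((Matrix.trace (genY n R)) • (1 : Matrix (Fin n) (Fin n) _))
      = (phiAux n R q (Matrix.trace (genY n R))) • (1 : Matrix (Fin n) (Fin n) (DualNumber R)) := by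
  refine Matrix.ext fun i j => ?_
  rw [AlgHom.mapMatrix_apply, Matrix.map_apply, Matrix.smul_apply, Matrix.smul_apply,
    smul_eq_mul, smul_eq_mul, _root_.map_mul, phiAux_one_entry]

lemma phiAux_genP (q : Fin n × Fin n) (i j : Fin n) :
    phiAux n R q (genP n R i j) = 0 := by
  have hm : (phiAux n R q).mapMatrix (genP n R) = 0 := by
    rw [genP, _root_.map_sub, _root_.map_sub, _root_.map_sub, _root_.map_one,
      AlgHom.map_adjugate, _root_.map_add, _root_.map_one, mapMatrix_genY,
      mapMatrix_smul_one, phiAux_trace, adjugate_one_add_map_inr]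
    abel
  have : phiAux n R q (genP n R i j) = ((phiAux n R q).mapMatrix (genP n R)) i j := rfl
  rw [this, hm]
  rfl

lemma genP_one_entry (R : Type*) [CommRing R] (i j : Fin 1) : genP 1 R i j = 0 := by
  have hij : i = j := Subsingleton.elim i j
  subst hij
  have h0 : i = 0 := Subsingleton.elim i 0
  subst h0
  rw [genP, Matrix.adjugate_subsingleton]
  simp [Matrix.sub_apply, Matrix.smul_apply, Matrix.trace_fin_one, Matrix.one_apply,
    smul_eq_mul]

end Main

/-- For any `n × n` matrix `C` over a commutative ring,
`Id − adj(Id + C) = (C − (Tr C)·Id) + P₂(C)`, where the entries of `P₂` are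
polynomials in the entries of `C` all of whose monomials have degree at least `2`
and at most `n − 1`. -/
theorem adjugate_one_add_expansion (n : ℕ) (R : Type*) [CommRing R] :
    ∃ P : Matrix (Fin n) (Fin n) (MvPolynomial (Fin n × Fin n) R),
      (∀ i j, ∀ d ∈ (P i j).support,
          2 ≤ d.sum (fun _ e => e) ∧ d.sum (fun _ e => e) ≤ n - 1) ∧
      ∀ C : Matrix (Fin n) (Fin n) R,
        (1 : Matrix (Fin n) (Fin n) R) - (1 + C).adjugate
          = (C - (Matrix.trace C) • (1 : Matrix (Fin n) (Fin n) R))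
            + Matrix.of (fun i j => MvPolynomial.eval (fun q : Fin n × Fin n => C q.1 q.2) (P i j)) := by
  classical
  refine ⟨genP n R, ?_, ?_⟩
  · intro i j d hd
    have hcoeff : coeff d (genP n R i j) ≠ 0 := mem_support_iff.mp hd
    constructor
    · by_contra hlt
      push_neg at hlt
      have h01 : d.sum (fun _ e => e) = 0 ∨ d.sum (fun _ e => e) = 1 := by omega
      rcases h01 with h0 | h1
      · have hd0 : d = 0 := finsupp_sum_eq_zero d h0
        apply hcoeff
        rw [hd0]
        have h2 := fst_phiAux (R := R) (i, j) (genP n R i j)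
        rw [phiAux_genP (i, j) i j, fst_zero] at h2
        rw [show (coeff 0 (genP n R i j)) = constantCoeff (genP n R i j) from
          (congrFun constantCoeff_eq (genP n R i j)).symm]
        exact h2.symm
      · obtain ⟨q, rfl⟩ := finsupp_sum_eq_one d h1
        apply hcoeff
        have h2 := snd_phiAux (R := R) q (genP n R i j)
        rw [phiAux_genP q i j, snd_zero] at h2
        exact h2.symm
    · -- upper bound
      rcases Nat.lt_or_ge n 2 with hn | hn
      · have hn1 : n = 1 := by
          have := i.pos
          omega
        subst hn1
        rw [genP_one_entry] at hd
        simp at hd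
      · -- n ≥ 2
        refine le_trans (le_totalDegree hd) ?_
        rw [genP]
        simp only [Matrix.sub_apply, Matrix.smul_apply, smul_eq_mul]
        have hone : ∀ a b : Fin n,
            ((1 : Matrix (Fin n) (Fin n) (MvPolynomial (Fin n × Fin n) R)) a b).totalDegree = 0 := by
          intro a b
          rw [Matrix.one_apply]
          split
          · exact totalDegree_one
          · exact totalDegree_zero
        have hadj : (((1 + genY n R).adjugate) i j).totalDegree ≤ n - 1 := by
          apply totalDegree_adjugate_le
          intro a b
          refine (totalDegree_add _ _).trans ?_
          rw [hone a b]
          simpa [genY] using totalDegree_X_le' (R := R) (a, b)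
        have htr : (Matrix.trace (genY n R)).totalDegree ≤ 1 := by
          rw [Matrix.trace]
          refine (totalDegree_finset_sum _ _).trans (Finset.sup_le fun k _ => ?_)
          simpa [Matrix.diag, genY] using totalDegree_X_le' (R := R) (k, k)
        have hYij : ((genY n R i j)).totalDegree ≤ 1 := by
          simpa [genY] using totalDegree_X_le' (R := R) (i, j)
        refine (totalDegree_sub _ _).trans ?_
        rw [max_le_iff]
        constructor
        · refine (totalDegree_sub _ _).trans ?_
          rw [max_le_iff]
          exact ⟨by rw [hone]; omega, hadj⟩
        · refine (totalDegree_sub _ _).trans ?_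
          rw [max_le_iff]
          refine ⟨by omega, ?_⟩
          refine (totalDegree_mul _ _).trans ?_
          have := hone i j
          omega
  · intro C
    set f : MvPolynomial (Fin n × Fin n) R →+* R :=
      MvPolynomial.eval (fun q : Fin n × Fin n => C q.1 q.2) with hf
    have key : (1 : Matrix (Fin n) (Fin n) (MvPolynomial (Fin n × Fin n) R))
        - (1 + genY n R).adjugate = (genY n R - (Matrix.trace (genY n R)) • 1) + genP n R := by
      rw [genP]; abel
    have happ := congrArg (fun M => f.mapMatrix M) key
    simp only [_root_.map_sub, _root_.map_add, _root_.map_one] at happ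
    have hFY : f.mapMatrix (genY n R) = C := by
      refine Matrix.ext fun i j => ?_
      simp [genY, hf, RingHom.mapMatrix_apply, Matrix.map_apply]
    have hFtr : f (Matrix.trace (genY n R)) = Matrix.trace C := by
      simp [Matrix.trace, Matrix.diag, hf, genY, map_sum]
    have hFsmul : f.mapMatrix ((Matrix.trace (genY n R)) • (1 : Matrix (Fin n) (Fin n) _))
        = (Matrix.trace C) • (1 : Matrix (Fin n) (Fin n) R) := by
      refine Matrix.ext fun i j => ?_
      rw [RingHom.mapMatrix_apply, Matrix.map_apply, Matrix.smul_apply, Matrix.smul_apply,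
        smul_eq_mul, smul_eq_mul, _root_.map_mul, hFtr]
      congr 1
      rw [Matrix.one_apply, Matrix.one_apply]
      split <;> simp
    rw [RingHom.map_adjugate, _root_.map_add, _root_.map_one, hFY, hFsmul] at happ
    rw [happ]
    rfl
end

section
/- (Piola identity) For any C² map X : ℝⁿ → ℝⁿ, the row-wise divergence of the adjugate of the Jacobian matrix vanishes: div_y(adj(D_yX)) = 0. -/
open Matrix

/-- The Jacobian matrix of a map `f : ℝⁿ → ℝⁿ`, with convention `(Df)_{ij} = ∂_j f^i`. -/
noncomputable def jacMat {n : ℕ} (f : EuclideanSpace ℝ (Fin n) → EuclideanSpace ℝ (Fin n))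
    (y : EuclideanSpace ℝ (Fin n)) : Matrix (Fin n) (Fin n) ℝ :=
  fun i j => fderiv ℝ f y (EuclideanSpace.single j 1) i

/-- Partial derivative `∂_i g` of a scalar function. -/
noncomputable def pd {n : ℕ} (i : Fin n) (g : EuclideanSpace ℝ (Fin n) → ℝ)
    (x : EuclideanSpace ℝ (Fin n)) : ℝ :=
  fderiv ℝ g x (EuclideanSpace.single i 1)

theorem Equiv.Perm.apply_inv_self {α : Type*} (f : Equiv.Perm α) (x : α) : f (f⁻¹ x) = x := by
  simp only [Equiv.Perm.coe_inv, Equiv.apply_symm_apply]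

theorem Equiv.Perm.inv_apply_self {α : Type*} (f : Equiv.Perm α) (x : α) : f⁻¹ (f x) = x := by
  simp only [Equiv.Perm.coe_inv, Equiv.symm_apply_apply]

/-- Piola identity: for any `C²` map `X : ℝⁿ → ℝⁿ`, the row-wise divergence
of the adjugate of the Jacobian matrix vanishes: `Σᵢ ∂ᵢ (adj D_yX)ᵢⱼ = 0` for every `j`. -/
theorem piola_identity {n : ℕ}
    (X : EuclideanSpace ℝ (Fin n) → EuclideanSpace ℝ (Fin n))
    (hX : ContDiff ℝ 2 X) (y : EuclideanSpace ℝ (Fin n)) (j : Fin n) :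
    ∑ i, pd i (fun z => (jacMat X z).adjugate i j) y = 0 := by
  classical
  have hF1 : ContDiff ℝ 1 (fderiv ℝ X) := hX.fderiv_right (by norm_num)
  set D := fderiv ℝ (fderiv ℝ X) y with hDdef
  have hD : HasFDerivAt (fderiv ℝ X) D y := ((hF1.differentiable one_ne_zero) y).hasFDerivAt
  set H : Fin n → Fin n → Fin n → ℝ :=
    fun k a b => (D (EuclideanSpace.single a 1) (EuclideanSpace.single b 1)) k with hH
  have hsymm : ∀ k a b, H k a b = H k b a := by
    intro k a b
    have h2 := (hX.contDiffAt (x := y)).isSymmSndFDerivAt (by simp [minSmoothness_of_isRCLikeNormedField])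
      (EuclideanSpace.single a 1) (EuclideanSpace.single b 1)
    simp only [hH, hDdef, h2]
  set Ψ : Fin n → Fin n →
      ((EuclideanSpace ℝ (Fin n) →L[ℝ] EuclideanSpace ℝ (Fin n)) →L[ℝ] ℝ) := fun k l =>
    (EuclideanSpace.proj k).comp
      (ContinuousLinearMap.apply ℝ (EuclideanSpace ℝ (Fin n)) (EuclideanSpace.single l 1)) with hΨ
  set L : Fin n → Fin n → (EuclideanSpace ℝ (Fin n) →L[ℝ] ℝ) :=
    fun k l => (Ψ k l).comp D with hL
  have hLapp : ∀ k l i, L k l (EuclideanSpace.single i 1) = H k i l := by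
    intro k l i; simp [hL, hΨ, hH]
  have hentry : ∀ k l, HasFDerivAt (fun z => jacMat X z k l) (L k l) y := by
    intro k l
    have h0 := (Ψ k l).hasFDerivAt.comp y hD
    have hfe : (fun z => jacMat X z k l) = fun z => Ψ k l (fderiv ℝ X z) := by
      funext z; simp [jacMat, hΨ]
    rw [hfe]; exact h0
  set A := jacMat X y with hA
  set c : Equiv.Perm (Fin n) → Fin n → (EuclideanSpace ℝ (Fin n) →L[ℝ] ℝ) :=
    fun σ m => if σ m = j then 0 else L (σ m) m with hc
  -- derivative of each entry of the modified matrix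
  have hNentry : ∀ (i : Fin n) (σ : Equiv.Perm (Fin n)) (k : Fin n),
      HasFDerivAt (fun z => (jacMat X z).updateRow j (Pi.single i 1) (σ k) k) (c σ k) y := by
    intro i σ k
    by_cases h : σ k = j
    · have hfe : (fun z => (jacMat X z).updateRow j (Pi.single i 1) (σ k) k)
          = fun _ => (Pi.single i 1 : Fin n → ℝ) k := by
        funext z; rw [Matrix.updateRow_apply, if_pos h]
      rw [hfe, hc]; simp only [if_pos h]; exact hasFDerivAt_const _ _
    · have hfe : (fun z => (jacMat X z).updateRow j (Pi.single i 1) (σ k) k)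
          = fun z => jacMat X z (σ k) k := by
        funext z; rw [Matrix.updateRow_apply, if_neg h]
      rw [hfe, hc]; simp only [if_neg h]; exact hentry _ _
  -- derivative of the adjugate entry
  have hadj : ∀ i, HasFDerivAt (fun z => (jacMat X z).adjugate i j)
      (∑ σ : Equiv.Perm (Fin n), ((Equiv.Perm.sign σ : ℤ) : ℝ) •
        ∑ m, (∏ k ∈ Finset.univ.erase m, A.updateRow j (Pi.single i 1) (σ k) k) • c σ m) y := by
    intro i
    have hfe : (fun z => (jacMat X z).adjugate i j)
        = fun z => ∑ σ : Equiv.Perm (Fin n), ((Equiv.Perm.sign σ : ℤ) : ℝ) *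
            ∏ k, (jacMat X z).updateRow j (Pi.single i 1) (σ k) k := by
      funext z; rw [Matrix.adjugate_apply, Matrix.det_apply']
    rw [hfe]
    apply HasFDerivAt.fun_sum
    intro σ _
    exact (HasFDerivAt.finset_prod (fun k _ => hNentry i σ k)).const_mul _
  -- compute the partial derivative
  have hpd : ∀ i, pd i (fun z => (jacMat X z).adjugate i j) y
      = ∑ σ : Equiv.Perm (Fin n), ((Equiv.Perm.sign σ : ℤ) : ℝ) *
          ∑ m, (∏ k ∈ Finset.univ.erase m, A.updateRow j (Pi.single i 1) (σ k) k) *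
            (if σ m = j then 0 else H (σ m) i m) := by
    intro i
    rw [pd, (hadj i).fderiv]
    simp only [ContinuousLinearMap.sum_apply, ContinuousLinearMap.smul_apply,
      ContinuousLinearMap.coe_sum', Finset.sum_apply, smul_eq_mul, hc]
    refine Finset.sum_congr rfl fun σ _ => ?_
    congr 1
    refine Finset.sum_congr rfl fun m _ => ?_
    by_cases h : σ m = j <;> simp [h, hLapp]
  -- Key: summing over i collapses the row replaced by `Pi.single i 1`
  have hkey : ∀ (σ : Equiv.Perm (Fin n)) (m : Fin n),
      ∑ i, (∏ k ∈ Finset.univ.erase m, A.updateRow j (Pi.single i 1) (σ k) k) *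
          (if σ m = j then 0 else H (σ m) i m)
      = if σ m = j then 0 else
          (∏ k ∈ (Finset.univ.erase m).erase (σ⁻¹ j), A (σ k) k) * H (σ m) (σ⁻¹ j) m := by
    intro σ m
    by_cases hm : σ m = j
    · simp [hm]
    · rw [if_neg hm]
      have hpm : σ⁻¹ j ≠ m := by
        intro h; exact hm (by rw [← h, Equiv.Perm.apply_inv_self])
      have hp : σ⁻¹ j ∈ Finset.univ.erase m := Finset.mem_erase.mpr ⟨hpm, Finset.mem_univ _⟩
      have hQ : ∀ i : Fin n, (∏ k ∈ Finset.univ.erase m, A.updateRow j (Pi.single i 1) (σ k) k)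
          = (if σ⁻¹ j = i then (1:ℝ) else 0) *
              ∏ k ∈ (Finset.univ.erase m).erase (σ⁻¹ j), A (σ k) k := by
        intro i
        rw [← Finset.mul_prod_erase _ _ hp]
        congr 1
        · rw [Matrix.updateRow_apply, if_pos (Equiv.Perm.apply_inv_self σ j), Pi.single_apply]
        · refine Finset.prod_congr rfl fun k hk => ?_
          have hkp : k ≠ σ⁻¹ j := (Finset.mem_erase.mp hk).1
          have hkj : σ k ≠ j := fun hkj => hkp (by rw [← hkj, Equiv.Perm.inv_apply_self])
          rw [Matrix.updateRow_apply, if_neg hkj]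
      simp_rw [hQ, if_neg hm]
      rw [Finset.sum_eq_single_of_mem (σ⁻¹ j) (Finset.mem_univ _)]
      · rw [if_pos rfl, one_mul]
      · intro b _ hb
        rw [if_neg (fun h => hb h.symm), zero_mul, zero_mul]
  -- rewrite the total sum
  rw [Finset.sum_congr rfl fun i _ => hpd i]
  simp_rw [Finset.mul_sum]
  rw [Finset.sum_comm]
  rw [Finset.sum_congr rfl fun σ _ => Finset.sum_comm]
  have hstep : ∀ (σ : Equiv.Perm (Fin n)) (m : Fin n),
      ∑ i, ((Equiv.Perm.sign σ : ℤ) : ℝ) *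
        ((∏ k ∈ Finset.univ.erase m, A.updateRow j (Pi.single i 1) (σ k) k) *
          (if σ m = j then 0 else H (σ m) i m))
      = ((Equiv.Perm.sign σ : ℤ) : ℝ) * (if σ m = j then 0 else
          (∏ k ∈ (Finset.univ.erase m).erase (σ⁻¹ j), A (σ k) k) * H (σ m) (σ⁻¹ j) m) := by
    intro σ m; rw [← Finset.mul_sum, hkey σ m]
  rw [Finset.sum_congr rfl fun σ _ => Finset.sum_congr rfl fun m _ => hstep σ m]
  -- the involution argument
  set F : Equiv.Perm (Fin n) × Fin n → ℝ := fun q =>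
    ((Equiv.Perm.sign q.1 : ℤ) : ℝ) * (if q.1 q.2 = j then 0 else
      (∏ k ∈ (Finset.univ.erase q.2).erase (q.1⁻¹ j), A (q.1 k) k) *
        H (q.1 q.2) (q.1⁻¹ j) q.2) with hF
  set gg : Equiv.Perm (Fin n) × Fin n → Equiv.Perm (Fin n) × Fin n :=
    fun q => (q.1 * Equiv.swap q.2 (q.1⁻¹ j), q.1⁻¹ j) with hgg
  have hinv2 : ∀ (σ : Equiv.Perm (Fin n)) (m : Fin n), (σ * Equiv.swap m (σ⁻¹ j))⁻¹ j = m := by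
    intro σ m
    rw [_root_.mul_inv_rev, Equiv.Perm.mul_apply, Equiv.swap_inv, Equiv.swap_apply_right]
  have hg3 : ∀ q, gg (gg q) = q := by
    rintro ⟨σ, m⟩
    simp only [hgg]
    rw [hinv2]
    refine Prod.ext ?_ rfl
    show (σ * Equiv.swap m (σ⁻¹ j)) * Equiv.swap (σ⁻¹ j) m = σ
    rw [Equiv.swap_comm, mul_assoc, Equiv.swap_mul_self, mul_one]
  have hg1 : ∀ q, F q + F (gg q) = 0 := by
    rintro ⟨σ, m⟩
    by_cases hm : σ m = j
    · have hpm : σ⁻¹ j = m := by rw [← hm, Equiv.Perm.inv_apply_self]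
      have : gg (σ, m) = (σ, m) := by
        simp only [hgg]; rw [hpm, Equiv.swap_self, ← Equiv.Perm.one_def, mul_one]
      rw [this]
      simp [hF, hm]
    · have hpm : m ≠ σ⁻¹ j := fun h => hm (by rw [h, Equiv.Perm.apply_inv_self])
      have h1 : (σ * Equiv.swap m (σ⁻¹ j)) (σ⁻¹ j) = σ m := by
        rw [Equiv.Perm.mul_apply, Equiv.swap_apply_right]
      have h2 : (σ * Equiv.swap m (σ⁻¹ j))⁻¹ j = m := hinv2 σ m
      have hsign : ((Equiv.Perm.sign (σ * Equiv.swap m (σ⁻¹ j)) : ℤ) : ℝ)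
          = -((Equiv.Perm.sign σ : ℤ) : ℝ) := by
        rw [Equiv.Perm.sign_mul, Equiv.Perm.sign_swap hpm]
        push_cast
        ring
      have hprodeq : ∏ k ∈ (Finset.univ.erase (σ⁻¹ j)).erase m,
            A ((σ * Equiv.swap m (σ⁻¹ j)) k) k
          = ∏ k ∈ (Finset.univ.erase m).erase (σ⁻¹ j), A (σ k) k := by
        rw [Finset.erase_right_comm]
        refine Finset.prod_congr rfl fun k hk => ?_
        have hk1 : k ≠ σ⁻¹ j := (Finset.mem_erase.mp hk).1
        have hk2 : k ≠ m := (Finset.mem_erase.mp (Finset.mem_erase.mp hk).2).1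
        rw [Equiv.Perm.mul_apply, Equiv.swap_apply_of_ne_of_ne hk2 hk1]
      simp only [hF, hgg]
      rw [h1, h2, hsign, if_neg hm, if_neg hm, hprodeq, hsymm (σ m) m (σ⁻¹ j)]
      ring
  have hg2 : ∀ q, F q ≠ 0 → gg q ≠ q := by
    rintro ⟨σ, m⟩ hne h
    by_cases hm : σ m = j
    · exact hne (by simp [hF, hm])
    · have hpm : m ≠ σ⁻¹ j := fun h' => hm (by rw [h', Equiv.Perm.apply_inv_self])
      exact hpm (congrArg Prod.snd h).symm
  calc ∑ σ : Equiv.Perm (Fin n), ∑ m, ((Equiv.Perm.sign σ : ℤ) : ℝ) * (if σ m = j then 0 else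
          (∏ k ∈ (Finset.univ.erase m).erase (σ⁻¹ j), A (σ k) k) * H (σ m) (σ⁻¹ j) m)
      = ∑ q : Equiv.Perm (Fin n) × Fin n, F q := by
        rw [Fintype.sum_prod_type]
    _ = 0 := Finset.sum_ninvolution gg hg1 hg2 (fun _ => Finset.mem_univ _) hg3
end
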